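/- Let η_H, η_h : T_H ∪ T_h → [0,∞) be refinement indicators on a mesh T_H and its refinement T_h, satisfying the reduction axiom η_h(T_h \ T_H; v)² ≤ q_red² · η_H(T_H \ T_h; v)² with 0 < q_red < 1, where for a subset U, η(U;v)² = Σ_{T∈U} η(T;v)². Assume moreover η_h(T;v) ≤ η_H(T;v) for T ∈ T_h ∩ T_H. If the Dörfler marking criterion θ · η_H(T_H; v)² ≤ η_H(M; v)² holds for a set M ⊆ T_H \ T_h with θ ∈ (0,1], then η_h(T_h; v)² ≤ (1 − (1 − q_red²)θ) · η_H(T_H; v)², i.e. the estimator contracts with factor q(θ) = (1 − (1−q_red²)θ)^{1/2} < 1. -/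
import Mathlib


open Finset

/-- Estimator reduction under Dörfler marking. -/
theorem estimator_reduction
    {α : Type*} [DecidableEq α]
    (TH Th M : Finset α) (ηH ηh : α → ℝ) (qred θ : ℝ)
    (hq0 : 0 < qred) (hq1 : qred < 1)
    (hθ0 : 0 < θ) (hθ1 : θ ≤ 1)
    (hηH_nonneg : ∀ T, 0 ≤ ηH T) (hηh_nonneg : ∀ T, 0 ≤ ηh T)
    (hreduction : ∑ T ∈ Th \ TH, (ηh T) ^ 2 ≤ qred ^ 2 * ∑ T ∈ TH \ Th, (ηH T) ^ 2)
    (hmono : ∀ T ∈ Th ∩ TH, ηh T ≤ ηH T)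
    (hM : M ⊆ TH \ Th)
    (hdorfler : θ * ∑ T ∈ TH, (ηH T) ^ 2 ≤ ∑ T ∈ M, (ηH T) ^ 2) :
    ∑ T ∈ Th, (ηh T) ^ 2 ≤ (1 - (1 - qred ^ 2) * θ) * ∑ T ∈ TH, (ηH T) ^ 2 := by
  have hsplit_h : ∑ T ∈ Th, (ηh T) ^ 2
      = ∑ T ∈ Th \ TH, (ηh T) ^ 2 + ∑ T ∈ Th ∩ TH, (ηh T) ^ 2 := by
    rw [← sdiff_inter_self_left Th TH, sum_sdiff inter_subset_left]
  have hsplit_H : ∑ T ∈ TH, (ηH T) ^ 2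
      = ∑ T ∈ TH \ Th, (ηH T) ^ 2 + ∑ T ∈ TH ∩ Th, (ηH T) ^ 2 := by
    rw [← sdiff_inter_self_left TH Th, sum_sdiff inter_subset_left]
  have hinter : ∑ T ∈ Th ∩ TH, (ηh T) ^ 2 ≤ ∑ T ∈ TH ∩ Th, (ηH T) ^ 2 := by
    rw [inter_comm]
    exact sum_le_sum fun T hT => by
      have := hmono T (by rwa [inter_comm] at hT)
      exact pow_le_pow_left₀ (hηh_nonneg T) this 2
  have hMle : ∑ T ∈ M, (ηH T) ^ 2 ≤ ∑ T ∈ TH \ Th, (ηH T) ^ 2 :=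
    sum_le_sum_of_subset_of_nonneg hM fun T _ _ => sq_nonneg _
  have key : ∑ T ∈ Th, (ηh T) ^ 2
      ≤ ∑ T ∈ TH, (ηH T) ^ 2 - (1 - qred ^ 2) * ∑ T ∈ TH \ Th, (ηH T) ^ 2 := by
    rw [hsplit_h, hsplit_H]; nlinarith
  have hq2 : 0 ≤ 1 - qred ^ 2 := by nlinarith
  have := mul_le_mul_of_nonneg_left (hdorfler.trans hMle) hq2
  linarith
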